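/- Let h ∈ (0,1) and λ ∈ (0,1). Then the function F_{1,λ} is twice continuously differentiable on ℝ with F_{1,λ}''(r) ≥ h for every r ∈ ℝ; in particular F_{1,λ} is convex on ℝ. -/

import Mathlib

/-- Convex singular part `F_{1,λ}` of the regularized Lennard--Jones potential. -/
noncomputable def F1reg (h l r : ℝ) : ℝ :=
  if r < 0 then -r^3/l + h/2 * r^2 + h*r
  else if r < 1 - l then -h * Real.log (1 - r)
  else -h * Real.log l + 3*h/2 - 2*h/l * (1 - r) + h/(2*l^2) * (1 - r)^2

/-- Non-convex regular part `F̄₂` of the regularized Lennard--Jones potential. -/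
noncomputable def F2reg (h r : ℝ) : ℝ :=
  if r < 1 then -r^3/3 - h*(r^2/2 + r)
  else -1/3 - 3*h/2 - (1 + 2*h)*(r - 1) - (2 + h)/2 * (r - 1)^2

/-- The regularized potential `F_λ = F_{1,λ} + F̄₂`. -/
noncomputable def Freg (h l r : ℝ) : ℝ := F1reg h l r + F2reg h r

open Set Filter

/-- first derivative of `F1reg`. -/
noncomputable def G1 (h l r : ℝ) : ℝ :=
  if r < 0 then -(3*r^2)/l + h*r + h
  else if r < 1 - l then h/(1-r)
  else 2*h/l - h/l^2 * (1-r)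

/-- second derivative of `F1reg`. -/
noncomputable def G2 (h l r : ℝ) : ℝ :=
  if r < 0 then -(6*r)/l + h
  else if r < 1 - l then h/(1-r)^2
  else h/l^2

lemma hasDerivAt_junction {f f₁ f₂ : ℝ → ℝ} {x d : ℝ}
    (h₁ : HasDerivAt f₁ d x) (h₂ : HasDerivAt f₂ d x)
    (e₁ : f =ᶠ[nhdsWithin x (Set.Iic x)] f₁)
    (e₂ : f =ᶠ[nhdsWithin x (Set.Ici x)] f₂)
    (hx₁ : f x = f₁ x) (hx₂ : f x = f₂ x) :
    HasDerivAt f d x := by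
  have H1 := (h₁.hasDerivWithinAt (s := Set.Iic x)).congr_of_eventuallyEq e₁ hx₁
  have H2 := (h₂.hasDerivWithinAt (s := Set.Ici x)).congr_of_eventuallyEq e₂ hx₂
  have H := H1.union H2
  rw [Set.Iic_union_Ici] at H
  exact hasDerivWithinAt_univ.mp H

lemma continuousAt_junction {f f₁ f₂ : ℝ → ℝ} {x : ℝ}
    (h₁ : ContinuousAt f₁ x) (h₂ : ContinuousAt f₂ x)
    (e₁ : f =ᶠ[nhdsWithin x (Set.Iic x)] f₁)
    (e₂ : f =ᶠ[nhdsWithin x (Set.Ici x)] f₂)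
    (hx₁ : f x = f₁ x) (hx₂ : f x = f₂ x) :
    ContinuousAt f x := by
  have H1 : ContinuousWithinAt f (Set.Iic x) x := by
    apply (h₁.continuousWithinAt (s := Set.Iic x)).congr_of_eventuallyEq e₁ hx₁
  have H2 : ContinuousWithinAt f (Set.Ici x) x := by
    apply (h₂.continuousWithinAt (s := Set.Ici x)).congr_of_eventuallyEq e₂ hx₂
  have H := H1.union H2
  rw [Set.Iic_union_Ici] at H
  exact (continuousWithinAt_univ f x).mp H

lemma hasDerivAt_p1 (h l r : ℝ) :
    HasDerivAt (fun r : ℝ => -r^3/l + h/2 * r^2 + h*r) (-(3*r^2)/l + h*r + h) r := by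
  have h1 : HasDerivAt (fun r : ℝ => -r^3/l) (-(3*r^2)/l) r := by
    exact ((hasDerivAt_pow 3 r).neg.div_const l).congr_deriv (by norm_num)
  have h2 : HasDerivAt (fun r : ℝ => h/2 * r^2) (h/2 * (2*r^1)) r := by
    simpa using ((hasDerivAt_pow 2 r).const_mul (h/2))
  have h3 : HasDerivAt (fun r : ℝ => h*r) (h*1) r := (hasDerivAt_id r).const_mul h
  refine ((h1.add h2).add h3).congr_deriv ?_
  ring

lemma hasDerivAt_p1' (h l r : ℝ) :
    HasDerivAt (fun r : ℝ => -(3*r^2)/l + h*r + h) (-(6*r)/l + h) r := by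
  have h1 : HasDerivAt (fun r : ℝ => -(3*r^2)/l) (-(3*(2*r^1))/l) r := by
    exact ((((hasDerivAt_pow 2 r).const_mul 3).neg.div_const l)).congr_deriv (by norm_num)
  have h2 : HasDerivAt (fun r : ℝ => h*r) (h*1) r := (hasDerivAt_id r).const_mul h
  have h3 : HasDerivAt (fun _ : ℝ => h) 0 r := hasDerivAt_const r h
  refine ((h1.add h2).add h3).congr_deriv ?_
  ring

lemma hasDerivAt_oneSub (r : ℝ) : HasDerivAt (fun r : ℝ => 1 - r) (-1) r := by
  exact ((hasDerivAt_const r (1:ℝ)).sub (hasDerivAt_id r)).congr_deriv (by ring)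

lemma hasDerivAt_p2 (h r : ℝ) (hr : r < 1) :
    HasDerivAt (fun r : ℝ => -h * Real.log (1 - r)) (h/(1-r)) r := by
  have h0 : (1:ℝ) - r ≠ 0 := by intro hc; linarith [sub_eq_zero.mp hc]
  have := ((hasDerivAt_oneSub r).log h0).const_mul (-h)
  refine this.congr_deriv ?_
  ring

lemma hasDerivAt_p2' (h r : ℝ) (hr : r < 1) :
    HasDerivAt (fun r : ℝ => h/(1-r)) (h/(1-r)^2) r := by
  have h0 : (1:ℝ) - r ≠ 0 := by intro hc; linarith [sub_eq_zero.mp hc]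
  have := ((hasDerivAt_oneSub r).inv h0).const_mul h
  simp only [div_eq_mul_inv]
  refine this.congr_deriv ?_
  ring

lemma hasDerivAt_p3 (h l r : ℝ) :
    HasDerivAt (fun r : ℝ => -h * Real.log l + 3*h/2 - 2*h/l * (1 - r) + h/(2*l^2) * (1 - r)^2)
      (2*h/l - h/l^2 * (1-r)) r := by
  have h1 : HasDerivAt (fun r : ℝ => -h * Real.log l + 3*h/2 - 2*h/l * (1 - r))
      (0 - 2*h/l * (-1)) r :=
    (hasDerivAt_const r (-h * Real.log l + 3*h/2)).sub ((hasDerivAt_oneSub r).const_mul (2*h/l))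
  have h2 : HasDerivAt (fun r : ℝ => h/(2*l^2) * (1 - r)^2)
      (h/(2*l^2) * ((2:ℕ) * (1-r)^1 * (-1))) r :=
    ((hasDerivAt_oneSub r).pow 2).const_mul (h/(2*l^2))
  refine (h1.add h2).congr_deriv ?_
  push_cast
  ring

lemma hasDerivAt_p3' (h l r : ℝ) :
    HasDerivAt (fun r : ℝ => 2*h/l - h/l^2 * (1-r)) (h/l^2) r := by
  have := (hasDerivAt_const r (2*h/l)).sub ((hasDerivAt_oneSub r).const_mul (h/l^2))
  refine this.congr_deriv ?_
  ring

lemma F1reg_hasDeriv (h l : ℝ) (hl0 : 0 < l) (hl1 : l < 1) (r : ℝ) :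
    HasDerivAt (F1reg h l) (G1 h l r) r := by
  have h01 : (0:ℝ) < 1 - l := by linarith
  rcases lt_trichotomy r 0 with hr | hr | hr
  · have e : Set.EqOn (F1reg h l) (fun r : ℝ => -r^3/l + h/2 * r^2 + h*r) (Set.Iio 0) :=
      fun y hy => by simp [F1reg, if_pos (show y < 0 from hy)]
    have := (hasDerivAt_p1 h l r).congr_of_eventuallyEq
      (eventuallyEq_of_mem (isOpen_Iio.mem_nhds hr) e)
    rw [G1.eq_def, if_pos hr]
    exact this
  · subst hr
    have hG : G1 h l 0 = h := by norm_num [G1, h01]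
    rw [hG]
    have h₁ : HasDerivAt (fun r : ℝ => -r^3/l + h/2 * r^2 + h*r) h 0 := by
      simpa using hasDerivAt_p1 h l 0
    have h₂ : HasDerivAt (fun r : ℝ => -h * Real.log (1 - r)) h 0 := by
      simpa using hasDerivAt_p2 h 0 (by norm_num)
    refine hasDerivAt_junction h₁ h₂ ?_ ?_ ?_ ?_
    · refine eventuallyEq_of_mem self_mem_nhdsWithin fun y hy => ?_
      rcases lt_or_eq_of_le (Set.mem_Iic.mp hy) with hy' | hy'
      · simp [F1reg, if_pos hy']
      · subst hy'; norm_num [F1reg, h01]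
    · refine eventuallyEq_of_mem (inter_mem self_mem_nhdsWithin
        (mem_nhdsWithin_of_mem_nhds (Iio_mem_nhds h01))) fun y hy => ?_
      have hy1 : ¬ y < 0 := not_lt.2 (Set.mem_Ici.mp hy.1)
      have hy2 : y < 1 - l := Set.mem_Iio.mp hy.2
      simp [F1reg, hy1, hy2]
    · norm_num [F1reg, h01]
    · norm_num [F1reg, h01]
  · rcases lt_trichotomy r (1 - l) with hr' | hr' | hr'
    · have e : Set.EqOn (F1reg h l) (fun r : ℝ => -h * Real.log (1 - r)) (Set.Ioo 0 (1-l)) :=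
        fun y hy => by simp [F1reg, not_lt.2 hy.1.le, if_pos hy.2]
      have := (hasDerivAt_p2 h r (by linarith)).congr_of_eventuallyEq
        (eventuallyEq_of_mem (isOpen_Ioo.mem_nhds ⟨hr, hr'⟩) e)
      rw [G1.eq_def, if_neg (not_lt.2 hr.le), if_pos hr']
      exact this
    · subst hr'
      have hl' : l ≠ 0 := ne_of_gt hl0
      have key : (1:ℝ) - (1 - l) = l := by ring
      have hG : G1 h l (1-l) = h/l := by
        rw [G1.eq_def, if_neg (not_lt.2 (by linarith)), if_neg (lt_irrefl _)]
        rw [key]; field_simp; ring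
      rw [hG]
      have h₁ : HasDerivAt (fun r : ℝ => -h * Real.log (1 - r)) (h/l) (1-l) := by
        have := hasDerivAt_p2 h (1-l) (by linarith)
        rwa [key] at this
      have h₂ : HasDerivAt
          (fun r : ℝ => -h * Real.log l + 3*h/2 - 2*h/l * (1 - r) + h/(2*l^2) * (1 - r)^2)
          (h/l) (1-l) := by
        have := hasDerivAt_p3 h l (1-l)
        rw [key] at this
        convert this using 1
        field_simp; ring
      have hpt : F1reg h l (1-l) = -h * Real.log l := by
        rw [F1reg.eq_def, if_neg (not_lt.2 (by linarith)), if_neg (lt_irrefl _), key]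
        field_simp; ring
      refine hasDerivAt_junction h₁ h₂ ?_ ?_ ?_ ?_
      · refine eventuallyEq_of_mem (inter_mem
          (mem_nhdsWithin_of_mem_nhds (Ioi_mem_nhds h01)) self_mem_nhdsWithin) fun y hy => ?_
        rcases lt_or_eq_of_le (Set.mem_Iic.mp hy.2) with hy' | hy'
        · simp [F1reg, not_lt.2 (le_of_lt (Set.mem_Ioi.mp hy.1)), if_pos hy']
        · subst hy'; rw [hpt, key]
      · refine eventuallyEq_of_mem self_mem_nhdsWithin fun y hy => ?_
        have : ¬ y < 1 - l := not_lt.2 (Set.mem_Ici.mp hy)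
        simp [F1reg, this, not_lt.2 (le_trans h01.le (Set.mem_Ici.mp hy))]
      · rw [hpt, key]
      · rw [hpt, key]
        field_simp; ring
    · have e : Set.EqOn (F1reg h l)
          (fun r : ℝ => -h * Real.log l + 3*h/2 - 2*h/l * (1 - r) + h/(2*l^2) * (1 - r)^2)
          (Set.Ioi (1-l)) := fun y hy => by
        have hy1 : ¬ y < 1 - l := not_lt.2 (le_of_lt hy)
        have hy0 : ¬ y < 0 := not_lt.2 (le_trans h01.le (le_of_lt hy))
        simp [F1reg, hy0, hy1]
      have := (hasDerivAt_p3 h l r).congr_of_eventuallyEq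
        (eventuallyEq_of_mem (isOpen_Ioi.mem_nhds hr') e)
      rw [G1.eq_def, if_neg (not_lt.2 hr.le), if_neg (not_lt.2 hr'.le)]
      exact this

lemma G1_hasDeriv (h l : ℝ) (hl0 : 0 < l) (hl1 : l < 1) (r : ℝ) :
    HasDerivAt (G1 h l) (G2 h l r) r := by
  have h01 : (0:ℝ) < 1 - l := by linarith
  have hl' : l ≠ 0 := ne_of_gt hl0
  rcases lt_trichotomy r 0 with hr | hr | hr
  · have e : Set.EqOn (G1 h l) (fun r : ℝ => -(3*r^2)/l + h*r + h) (Set.Iio 0) :=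
      fun y hy => by simp [G1, if_pos (show y < 0 from hy)]
    have := (hasDerivAt_p1' h l r).congr_of_eventuallyEq
      (eventuallyEq_of_mem (isOpen_Iio.mem_nhds hr) e)
    rw [G2.eq_def, if_pos hr]
    exact this
  · subst hr
    have hG : G2 h l 0 = h := by norm_num [G2, h01]
    rw [hG]
    have h₁ : HasDerivAt (fun r : ℝ => -(3*r^2)/l + h*r + h) h 0 := by
      simpa using hasDerivAt_p1' h l 0
    have h₂ : HasDerivAt (fun r : ℝ => h/(1-r)) h 0 := by
      simpa using hasDerivAt_p2' h 0 (by norm_num)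
    refine hasDerivAt_junction h₁ h₂ ?_ ?_ ?_ ?_
    · refine eventuallyEq_of_mem self_mem_nhdsWithin fun y hy => ?_
      rcases lt_or_eq_of_le (Set.mem_Iic.mp hy) with hy' | hy'
      · simp [G1, if_pos hy']
      · subst hy'; norm_num [G1, h01]
    · refine eventuallyEq_of_mem (inter_mem self_mem_nhdsWithin
        (mem_nhdsWithin_of_mem_nhds (Iio_mem_nhds h01))) fun y hy => ?_
      have hy1 : ¬ y < 0 := not_lt.2 (Set.mem_Ici.mp hy.1)
      have hy2 : y < 1 - l := Set.mem_Iio.mp hy.2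
      simp [G1, hy1, hy2]
    · norm_num [G1, h01]
    · norm_num [G1, h01]
  · rcases lt_trichotomy r (1 - l) with hr' | hr' | hr'
    · have e : Set.EqOn (G1 h l) (fun r : ℝ => h/(1-r)) (Set.Ioo 0 (1-l)) :=
        fun y hy => by simp [G1, not_lt.2 hy.1.le, if_pos hy.2]
      have := (hasDerivAt_p2' h r (by linarith)).congr_of_eventuallyEq
        (eventuallyEq_of_mem (isOpen_Ioo.mem_nhds ⟨hr, hr'⟩) e)
      rw [G2.eq_def, if_neg (not_lt.2 hr.le), if_pos hr']
      exact this
    · subst hr'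
      have key : (1:ℝ) - (1 - l) = l := by ring
      have hG : G2 h l (1-l) = h/l^2 := by
        rw [G2.eq_def, if_neg (not_lt.2 (by linarith)), if_neg (lt_irrefl _)]
      rw [hG]
      have h₁ : HasDerivAt (fun r : ℝ => h/(1-r)) (h/l^2) (1-l) := by
        have := hasDerivAt_p2' h (1-l) (by linarith)
        rwa [key] at this
      have h₂ : HasDerivAt (fun r : ℝ => 2*h/l - h/l^2 * (1-r)) (h/l^2) (1-l) :=
        hasDerivAt_p3' h l (1-l)
      have hpt : G1 h l (1-l) = h/l := by
        rw [G1.eq_def, if_neg (not_lt.2 (by linarith)), if_neg (lt_irrefl _), key]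
        field_simp; ring
      refine hasDerivAt_junction h₁ h₂ ?_ ?_ ?_ ?_
      · refine eventuallyEq_of_mem (inter_mem
          (mem_nhdsWithin_of_mem_nhds (Ioi_mem_nhds h01)) self_mem_nhdsWithin) fun y hy => ?_
        rcases lt_or_eq_of_le (Set.mem_Iic.mp hy.2) with hy' | hy'
        · simp [G1, not_lt.2 (le_of_lt (Set.mem_Ioi.mp hy.1)), if_pos hy']
        · subst hy'; rw [hpt, key]
      · refine eventuallyEq_of_mem self_mem_nhdsWithin fun y hy => ?_
        have : ¬ y < 1 - l := not_lt.2 (Set.mem_Ici.mp hy)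
        simp [G1, this, not_lt.2 (le_trans h01.le (Set.mem_Ici.mp hy))]
      · rw [hpt, key]
      · rw [hpt, key]; field_simp; ring
    · have e : Set.EqOn (G1 h l) (fun r : ℝ => 2*h/l - h/l^2 * (1-r)) (Set.Ioi (1-l)) :=
        fun y hy => by
          have hy1 : ¬ y < 1 - l := not_lt.2 (le_of_lt hy)
          have hy0 : ¬ y < 0 := not_lt.2 (le_trans h01.le (le_of_lt hy))
          simp [G1, hy0, hy1]
      have := (hasDerivAt_p3' h l r).congr_of_eventuallyEq
        (eventuallyEq_of_mem (isOpen_Ioi.mem_nhds hr') e)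
      rw [G2.eq_def, if_neg (not_lt.2 hr.le), if_neg (not_lt.2 hr'.le)]
      exact this

lemma G2_continuous (h l : ℝ) (hl0 : 0 < l) (hl1 : l < 1) : Continuous (G2 h l) := by
  have h01 : (0:ℝ) < 1 - l := by linarith
  rw [continuous_iff_continuousAt]
  intro r
  rcases lt_trichotomy r 0 with hr | hr | hr
  · have e : Set.EqOn (G2 h l) (fun r : ℝ => -(6*r)/l + h) (Set.Iio 0) :=
      fun y hy => by simp [G2, if_pos (show y < 0 from hy)]
    exact ((Continuous.continuousAt (by continuity)).congr
      (eventuallyEq_of_mem (isOpen_Iio.mem_nhds hr) e).symm)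
  · subst hr
    have h₁ : ContinuousAt (fun r : ℝ => -(6*r)/l + h) 0 := Continuous.continuousAt (by continuity)
    have h₂ : ContinuousAt (fun r : ℝ => h/(1-r)^2) 0 := by
      apply ContinuousAt.div (continuousAt_const)
      · exact Continuous.continuousAt (by continuity)
      · norm_num
    refine continuousAt_junction h₁ h₂ ?_ ?_ ?_ ?_
    · refine eventuallyEq_of_mem self_mem_nhdsWithin fun y hy => ?_
      rcases lt_or_eq_of_le (Set.mem_Iic.mp hy) with hy' | hy'
      · simp [G2, if_pos hy']
      · subst hy'; norm_num [G2, h01]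
    · refine eventuallyEq_of_mem (inter_mem self_mem_nhdsWithin
        (mem_nhdsWithin_of_mem_nhds (Iio_mem_nhds h01))) fun y hy => ?_
      have hy1 : ¬ y < 0 := not_lt.2 (Set.mem_Ici.mp hy.1)
      have hy2 : y < 1 - l := Set.mem_Iio.mp hy.2
      simp [G2, hy1, hy2]
    · norm_num [G2, h01]
    · norm_num [G2, h01]
  · rcases lt_trichotomy r (1 - l) with hr' | hr' | hr'
    · have e : Set.EqOn (G2 h l) (fun r : ℝ => h/(1-r)^2) (Set.Ioo 0 (1-l)) :=
        fun y hy => by simp [G2, not_lt.2 hy.1.le, if_pos hy.2]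
      have h₂ : ContinuousAt (fun r : ℝ => h/(1-r)^2) r := by
        apply ContinuousAt.div (continuousAt_const)
        · exact Continuous.continuousAt (by continuity)
        · have : (0:ℝ) < 1 - r := by linarith
          positivity
      exact h₂.congr (eventuallyEq_of_mem (isOpen_Ioo.mem_nhds ⟨hr, hr'⟩) e).symm
  
    · subst hr'
      have key : (1:ℝ) - (1 - l) = l := by ring
      have h₁ : ContinuousAt (fun r : ℝ => h/(1-r)^2) (1-l) := by
        apply ContinuousAt.div (continuousAt_const)
        · exact Continuous.continuousAt (by continuity)
        · rw [key]; positivity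
      have h₂ : ContinuousAt (fun _ : ℝ => h/l^2) (1-l) := continuousAt_const
      refine continuousAt_junction h₁ h₂ ?_ ?_ ?_ ?_
      · refine eventuallyEq_of_mem (inter_mem
          (mem_nhdsWithin_of_mem_nhds (Ioi_mem_nhds h01)) self_mem_nhdsWithin) fun y hy => ?_
        rcases lt_or_eq_of_le (Set.mem_Iic.mp hy.2) with hy' | hy'
        · simp [G2, not_lt.2 (le_of_lt (Set.mem_Ioi.mp hy.1)), if_pos hy']
        · subst hy'
          rw [G2.eq_def, if_neg (not_lt.2 (by linarith)), if_neg (lt_irrefl _), key]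
      · refine eventuallyEq_of_mem self_mem_nhdsWithin fun y hy => ?_
        have : ¬ y < 1 - l := not_lt.2 (Set.mem_Ici.mp hy)
        simp [G2, this, not_lt.2 (le_trans h01.le (Set.mem_Ici.mp hy))]
      · rw [G2.eq_def, if_neg (not_lt.2 (by linarith)), if_neg (lt_irrefl _), key]
      · rw [G2.eq_def, if_neg (not_lt.2 (by linarith)), if_neg (lt_irrefl _)]
    · have e : Set.EqOn (G2 h l) (fun _ : ℝ => h/l^2) (Set.Ioi (1-l)) :=
        fun y hy => by
          have hy1 : ¬ y < 1 - l := not_lt.2 (le_of_lt hy)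
          have hy0 : ¬ y < 0 := not_lt.2 (le_trans h01.le (le_of_lt hy))
          simp [G2, hy0, hy1]
      exact continuousAt_const.congr (eventuallyEq_of_mem (isOpen_Ioi.mem_nhds hr') e).symm

lemma G2_ge (h l : ℝ) (hh0 : 0 < h) (hl0 : 0 < l) (hl1 : l < 1) (r : ℝ) :
    h ≤ G2 h l r := by
  rw [G2]
  split_ifs with h1 h2
  · have : 0 ≤ -(6*r)/l := div_nonneg (by linarith) hl0.le
    linarith
  · push_neg at h1
    have h1r : 0 < 1 - r := by linarith
    rw [le_div_iff₀ (by positivity)]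
    have hsq : (1-r)^2 ≤ 1 := by nlinarith
    nlinarith
  · rw [le_div_iff₀ (by positivity)]
    have hsq : l^2 ≤ 1 := by nlinarith
    nlinarith

/-- `F_{1,λ}` is twice continuously differentiable with `F_{1,λ}'' ≥ h` everywhere;
in particular it is convex on `ℝ`. -/
theorem F1reg_contDiff_convex (h l : ℝ)
    (hh : h ∈ Set.Ioo (0:ℝ) 1) (hl : l ∈ Set.Ioo (0:ℝ) 1) :
    ContDiff ℝ 2 (F1reg h l) ∧
    (∀ r : ℝ, h ≤ deriv (deriv (F1reg h l)) r) ∧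
    ConvexOn ℝ Set.univ (F1reg h l) := by
  obtain ⟨hh0, hh1⟩ := hh
  obtain ⟨hl0, hl1⟩ := hl
  have hd1 := F1reg_hasDeriv h l hl0 hl1
  have hd2 := G1_hasDeriv h l hl0 hl1
  have hD1 : deriv (F1reg h l) = G1 h l := funext fun r => (hd1 r).deriv
  have hD2 : deriv (deriv (F1reg h l)) = G2 h l := by
    rw [hD1]; exact funext fun r => (hd2 r).deriv
  have hdiff1 : Differentiable ℝ (F1reg h l) := fun r => (hd1 r).differentiableAt
  have hdiff2 : Differentiable ℝ (deriv (F1reg h l)) := by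
    rw [hD1]; exact fun r => (hd2 r).differentiableAt
  have hcont := G2_continuous h l hl0 hl1
  refine ⟨?_, ?_, ?_⟩
  · rw [show (2 : WithTop ℕ∞) = 1 + 1 from rfl, contDiff_succ_iff_deriv]
    refine ⟨hdiff1, by simp, ?_⟩
    rw [contDiff_one_iff_deriv]
    exact ⟨hdiff2, by rw [hD2]; exact hcont⟩
  · intro r
    rw [hD2]
    exact G2_ge h l hh0 hl0 hl1 r
  · apply convexOn_univ_of_deriv2_nonneg hdiff1 hdiff2
    intro x
    have : deriv^[2] (F1reg h l) x = deriv (deriv (F1reg h l)) x := by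
      simp [Function.iterate_succ, Function.iterate_zero]
    rw [this, hD2]
    linarith [G2_ge h l hh0 hl0 hl1 x]
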